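/- With T the crossing-time map defined implicitly by X(T(x,y), x, y) = -x for the flow of ẋ = f(x,y), ẏ = g(x,y) with f(0,0) ≠ 0, one has ∂T/∂y (0,0) = 0. -/

import Mathlib

open Set Metric Filter Topology

/-- Invariance helper: if `u 0 = 0` and the speeds are bounded while the solution
stays in a box, then the solution stays in the (half-sized) box for small time. -/
lemma inv_helper (u v fu fv : ℝ → ℝ) (r M G τ : ℝ)
    (hr : 0 < r) (hτ : 0 ≤ τ)
    (hu : ∀ t, HasDerivAt u (fu t) t) (hv : ∀ t, HasDerivAt v (fv t) t)
    (hu0 : u 0 = 0)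
    (hMτ : M * τ ≤ r / 4) (hGτ : G * τ ≤ r / 4)
    (hbound : ∀ t, |u t| ≤ r / 2 → |v t - v 0| ≤ r / 2 → |fu t| ≤ M ∧ |fv t| ≤ G) :
    ∀ t ∈ Set.Icc (0 : ℝ) τ, |u t| ≤ r / 2 ∧ |v t - v 0| ≤ r / 2 := by
  have hucont : Continuous u := continuous_iff_continuousAt.2 fun t => (hu t).continuousAt
  have hvcont : Continuous v := continuous_iff_continuousAt.2 fun t => (hv t).continuousAt
  have hM0 : 0 ≤ M := by
    have := (hbound 0 (by simp [hu0]; linarith) (by simp; linarith)).1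
    exact le_trans (abs_nonneg _) this
  have hG0 : 0 ≤ G := by
    have := (hbound 0 (by simp [hu0]; linarith) (by simp; linarith)).2
    exact le_trans (abs_nonneg _) this
  set E : Set ℝ := (Set.Icc 0 τ) ∩ ({t | r / 2 ≤ |u t|} ∪ {t | r / 2 ≤ |v t - v 0|}) with hE
  have hEclosed : IsClosed E := by
    apply isClosed_Icc.inter
    exact (isClosed_le continuous_const hucont.abs).union
      (isClosed_le continuous_const (hvcont.sub continuous_const).abs)
  have hEsub : E ⊆ Set.Icc 0 τ := Set.inter_subset_left
  have h0E : (0 : ℝ) ∉ E := by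
    intro h
    rcases h.2 with h | h
    · simp [hu0] at h; linarith
    · simp at h; linarith
  suffices hempty : E = ∅ by
    intro t ht
    have htE : t ∉ E := by rw [hempty]; exact Set.notMem_empty t
    rw [hE] at htE
    simp only [Set.mem_inter_iff, Set.mem_union, Set.mem_setOf_eq, not_and, not_or, not_le] at htE
    exact ⟨(htE ht).1.le, (htE ht).2.le⟩
  by_contra hne
  have hEne : E.Nonempty := Set.nonempty_iff_ne_empty.2 hne
  have hbdd : BddBelow E := ⟨0, fun x hx => (hEsub hx).1⟩
  set t₀ := sInf E with ht₀def
  have ht₀E : t₀ ∈ E := hEclosed.csInf_mem hEne hbdd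
  have ht₀Icc : t₀ ∈ Set.Icc (0 : ℝ) τ := hEsub ht₀E
  have ht₀pos : 0 < t₀ := lt_of_le_of_ne ht₀Icc.1 (fun h => h0E (h ▸ ht₀E))
  have hIco : ∀ s ∈ Set.Ico (0 : ℝ) t₀, |u s| ≤ r / 2 ∧ |v s - v 0| ≤ r / 2 := by
    intro s hs
    have hsE : s ∉ E := fun hsE => absurd (csInf_le hbdd hsE) (not_le.2 hs.2)
    rw [hE] at hsE
    simp only [Set.mem_inter_iff, Set.mem_union, Set.mem_setOf_eq, not_and, not_or, not_le] at hsE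
    have hsIcc : s ∈ Set.Icc (0 : ℝ) τ := ⟨hs.1, le_trans hs.2.le ht₀Icc.2⟩
    exact ⟨(hsE hsIcc).1.le, (hsE hsIcc).2.le⟩
  have hIcc : ∀ s ∈ Set.Icc (0 : ℝ) t₀, |u s| ≤ r / 2 ∧ |v s - v 0| ≤ r / 2 := by
    intro s hs
    rcases lt_or_eq_of_le hs.2 with h | h
    · exact hIco s ⟨hs.1, h⟩
    · rw [h]
      have hmem : Set.Ico (0 : ℝ) t₀ ∈ 𝓝[<] t₀ := Ico_mem_nhdsLT_of_mem ⟨ht₀pos, le_refl t₀⟩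
      constructor
      · refine le_of_tendsto ((hucont.abs.tendsto t₀).mono_left (nhdsWithin_le_nhds (s := Set.Iio t₀))) ?_
        filter_upwards [hmem] with x hx using (hIco x hx).1
      · refine le_of_tendsto (((hvcont.sub continuous_const).abs.tendsto t₀).mono_left
          (nhdsWithin_le_nhds (s := Set.Iio t₀))) ?_
        filter_upwards [hmem] with x hx using (hIco x hx).2
  have hmvtu : |u t₀ - u 0| ≤ M * (t₀ - 0) := by
    have := norm_image_sub_le_of_norm_deriv_le_segment'
      (f := u) (f' := fu) (a := 0) (b := t₀) (C := M)
      (fun x hx => (hu x).hasDerivWithinAt)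
      (fun x hx => by
        rw [Real.norm_eq_abs]
        exact (hbound x (hIcc x (Set.mem_Icc_of_Ico hx)).1 (hIcc x (Set.mem_Icc_of_Ico hx)).2).1)
      t₀ (Set.right_mem_Icc.2 ht₀Icc.1)
    simpa [Real.norm_eq_abs] using this
  have hmvtv : |v t₀ - v 0| ≤ G * (t₀ - 0) := by
    have := norm_image_sub_le_of_norm_deriv_le_segment'
      (f := v) (f' := fv) (a := 0) (b := t₀) (C := G)
      (fun x hx => (hv x).hasDerivWithinAt)
      (fun x hx => by
        rw [Real.norm_eq_abs]
        exact (hbound x (hIcc x (Set.mem_Icc_of_Ico hx)).1 (hIcc x (Set.mem_Icc_of_Ico hx)).2).2)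
      t₀ (Set.right_mem_Icc.2 ht₀Icc.1)
    simpa [Real.norm_eq_abs] using this
  have hMt : M * t₀ ≤ r / 4 := le_trans (mul_le_mul_of_nonneg_left ht₀Icc.2 hM0) hMτ
  have hGt : G * t₀ ≤ r / 4 := le_trans (mul_le_mul_of_nonneg_left ht₀Icc.2 hG0) hGτ
  have hut : |u t₀| ≤ r / 4 := by
    rw [hu0] at hmvtu; simp at hmvtu; linarith [hmvtu]
  have hvt : |v t₀ - v 0| ≤ r / 4 := by simp at hmvtv; linarith [hmvtv]
  rcases ht₀E.2 with h | h
  · simp only [Set.mem_setOf_eq] at h; linarith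
  · simp only [Set.mem_setOf_eq] at h; linarith

theorem crossing_time_deriv_y
    (f g : ℝ × ℝ → ℝ) (hf : ContDiff ℝ 2 f) (hg : ContDiff ℝ 2 g)
    (hf0 : f (0, 0) ≠ 0)
    (X Y : ℝ → ℝ → ℝ → ℝ)
    (hX0 : ∀ x y, X 0 x y = x) (hY0 : ∀ x y, Y 0 x y = y)
    (hXflow : ∀ t x y, HasDerivAt (fun s => X s x y) (f (X t x y, Y t x y)) t)
    (hYflow : ∀ t x y, HasDerivAt (fun s => Y s x y) (g (X t x y, Y t x y)) t)
    (T : ℝ × ℝ → ℝ) (hT0 : T (0, 0) = 0)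
    (hT : ∃ U ∈ nhds ((0, 0) : ℝ × ℝ),
      ContDiffOn ℝ 1 T U ∧ ∀ p ∈ U, X (T p) p.1 p.2 = -p.1) :
    deriv (fun y => T (0, y)) 0 = 0 := by
  obtain ⟨U, hU, hTc, hXT⟩ := hT
  have hfc : Continuous f := hf.continuous
  have hgc : Continuous g := hg.continuous
  -- find a ball where f is nonzero
  have hev : ∀ᶠ p in 𝓝 ((0, 0) : ℝ × ℝ), f p ≠ 0 := hfc.continuousAt.eventually_ne hf0
  obtain ⟨ε, hεpos, hball⟩ := Metric.eventually_nhds_iff_ball.1 hev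
  set r : ℝ := ε / 4 with hrdef
  have hrpos : 0 < r := by positivity
  have hK : IsCompact (Metric.closedBall ((0, 0) : ℝ × ℝ) (2 * r)) := isCompact_closedBall _ _
  obtain ⟨M, hM⟩ := hK.exists_bound_of_continuousOn hfc.continuousOn
  obtain ⟨G, hG⟩ := hK.exists_bound_of_continuousOn hgc.continuousOn
  have hM0 : 0 ≤ M := le_trans (norm_nonneg _) (hM (0, 0) (by simp; positivity))
  have hG0 : 0 ≤ G := le_trans (norm_nonneg _) (hG (0, 0) (by simp; positivity))
  set τ : ℝ := min (r / (4 * (M + 1))) (r / (4 * (G + 1))) with hτdef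
  have hτpos : 0 < τ := lt_min (by positivity) (by positivity)
  have hMτ : M * τ ≤ r / 4 := by
    have h1 : τ ≤ r / (4 * (M + 1)) := min_le_left _ _
    have h2 : M * τ ≤ (M + 1) * (r / (4 * (M + 1))) := by
      have : M * τ ≤ (M + 1) * τ := by nlinarith
      refine le_trans this (mul_le_mul_of_nonneg_left h1 (by linarith))
    have h3 : (M + 1) * (r / (4 * (M + 1))) = r / 4 := by
      field_simp
    linarith
  have hGτ : G * τ ≤ r / 4 := by
    have h1 : τ ≤ r / (4 * (G + 1)) := min_le_right _ _
    have h2 : G * τ ≤ (G + 1) * (r / (4 * (G + 1))) := by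
      have : G * τ ≤ (G + 1) * τ := by nlinarith
      refine le_trans this (mul_le_mul_of_nonneg_left h1 (by linarith))
    have h3 : (G + 1) * (r / (4 * (G + 1))) = r / 4 := by
      field_simp
    linarith
  -- invariance for |y| ≤ r, |t| ≤ τ
  have hinv : ∀ y : ℝ, |y| ≤ r → ∀ t : ℝ, |t| ≤ τ →
      |X t 0 y| ≤ r / 2 ∧ |Y t 0 y - y| ≤ r / 2 := by
    intro y hy
    have hbnd : ∀ a b : ℝ, |a| ≤ r / 2 → |b - y| ≤ r / 2 →
        |f (a, b)| ≤ M ∧ |g (a, b)| ≤ G := by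
      intro a b ha hb
      have hmem : (a, b) ∈ Metric.closedBall ((0, 0) : ℝ × ℝ) (2 * r) := by
        rw [Metric.mem_closedBall]
        have h1 : dist (a, b) ((0, 0) : ℝ × ℝ) = max (dist a 0) (dist b 0) := rfl
        rw [h1]
        apply max_le
        · rw [Real.dist_eq, sub_zero]; linarith
        · rw [Real.dist_eq, sub_zero]
          calc |b| ≤ |b - y| + |y| := by
                have := abs_sub_abs_le_abs_sub b y
                have := abs_add_le (b - y) y
                calc |b| = |(b - y) + y| := by ring_nf
                  _ ≤ |b - y| + |y| := abs_add_le _ _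
            _ ≤ 2 * r := by linarith
      exact ⟨hM (a, b) hmem, hG (a, b) hmem⟩
    -- forward time
    have hfwd : ∀ t ∈ Set.Icc (0 : ℝ) τ, |X t 0 y| ≤ r / 2 ∧ |Y t 0 y - y| ≤ r / 2 := by
      have := inv_helper (fun t => X t 0 y) (fun t => Y t 0 y)
        (fun t => f (X t 0 y, Y t 0 y)) (fun t => g (X t 0 y, Y t 0 y)) r M G τ
        hrpos hτpos.le (fun t => hXflow t 0 y) (fun t => hYflow t 0 y)
        (hX0 0 y) hMτ hGτ
        (fun t h1 h2 => hbnd _ _ h1 (by simpa [hY0 0 y] using h2))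
      intro t ht
      have h := this t ht
      simpa [hY0 0 y] using h
    -- backward time via time reversal
    have hbwd : ∀ t ∈ Set.Icc (0 : ℝ) τ, |X (-t) 0 y| ≤ r / 2 ∧ |Y (-t) 0 y - y| ≤ r / 2 := by
      have hXr : ∀ t : ℝ, HasDerivAt (fun s => X (-s) 0 y)
          (-(f (X (-t) 0 y, Y (-t) 0 y))) t := by
        intro t
        have h1 := (hXflow (-t) 0 y).comp t (hasDerivAt_neg t)
        simpa [mul_comm, Function.comp_def] using h1
      have hYr : ∀ t : ℝ, HasDerivAt (fun s => Y (-s) 0 y)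
          (-(g (X (-t) 0 y, Y (-t) 0 y))) t := by
        intro t
        have h1 := (hYflow (-t) 0 y).comp t (hasDerivAt_neg t)
        simpa [mul_comm, Function.comp_def] using h1
      have := inv_helper (fun t => X (-t) 0 y) (fun t => Y (-t) 0 y)
        (fun t => -(f (X (-t) 0 y, Y (-t) 0 y))) (fun t => -(g (X (-t) 0 y, Y (-t) 0 y)))
        r M G τ hrpos hτpos.le hXr hYr
        (by simpa using hX0 0 y) hMτ hGτ
        (fun t h1 h2 => by
          rw [abs_neg, abs_neg]
          exact hbnd _ _ h1 (by simpa [hY0 0 y] using h2))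
      intro t ht
      have h := this t ht
      simpa [hY0 0 y] using h
    intro t ht
    rcases le_total 0 t with h | h
    · exact hfwd t ⟨h, by rwa [abs_of_nonneg h] at ht⟩
    · have := hbwd (-t) ⟨by linarith, by rwa [abs_of_nonpos h] at ht⟩
      simpa using this
  -- injectivity: the only zero of X · 0 y in [-τ, τ] is 0
  have hinj : ∀ y : ℝ, |y| ≤ r → ∀ t : ℝ, |t| ≤ τ → X t 0 y = 0 → t = 0 := by
    intro y hy t ht hXt
    by_contra hne
    have hXcont : Continuous (fun s => X s 0 y) :=
      continuous_iff_continuousAt.2 fun s => (hXflow s 0 y).continuousAt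
    -- get a < b with X a = X b = 0, both in [-τ, τ]
    have key : ∀ a b : ℝ, a < b → |a| ≤ τ → |b| ≤ τ → X a 0 y = 0 → X b 0 y = 0 → False := by
      intro a b hab ha hb hXa hXb
      obtain ⟨c, hc, hfc0⟩ := exists_hasDerivAt_eq_zero hab
        (hXcont.continuousOn) (hXa.trans hXb.symm)
        (fun x _ => hXflow x 0 y)
      have hcτ : |c| ≤ τ := by
        rw [abs_le] at ha hb ⊢
        exact ⟨le_trans ha.1 hc.1.le, le_trans hc.2.le hb.2⟩
      have hXc := (hinv y hy c hcτ).1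
      have hYc := (hinv y hy c hcτ).2
      have hmem : (X c 0 y, Y c 0 y) ∈ Metric.ball ((0, 0) : ℝ × ℝ) ε := by
        rw [Metric.mem_ball]
        have h1 : dist (X c 0 y, Y c 0 y) ((0, 0) : ℝ × ℝ) =
            max (dist (X c 0 y) 0) (dist (Y c 0 y) 0) := rfl
        rw [h1]
        apply max_lt
        · rw [Real.dist_eq, sub_zero]
          have : r / 2 < ε := by rw [hrdef]; linarith
          linarith
        · rw [Real.dist_eq, sub_zero]
          have hYb : |Y c 0 y| ≤ |Y c 0 y - y| + |y| := by
            calc |Y c 0 y| = |(Y c 0 y - y) + y| := by ring_nf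
              _ ≤ |Y c 0 y - y| + |y| := abs_add_le _ _
          have : (3 : ℝ) / 2 * r < ε := by rw [hrdef]; linarith
          linarith
      exact hball _ hmem hfc0
    have hX00 : X 0 0 y = 0 := hX0 0 y
    rcases lt_or_gt_of_ne hne with h | h
    · exact key t 0 h ht (by simp [hτpos.le]) hXt hX00
    · exact key 0 t h (by simp [hτpos.le]) ht hX00 hXt
  -- T (0, y) = 0 for y near 0
  have hTcont : ContinuousAt (fun y : ℝ => T (0, y)) 0 := by
    have h1 : ContinuousAt T ((0, 0) : ℝ × ℝ) :=
      (hTc.continuousOn).continuousAt hU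
    have h2 : Continuous (fun y : ℝ => ((0 : ℝ), y)) := continuous_const.prodMk continuous_id
    exact h1.comp h2.continuousAt
  have hTtend : Filter.Tendsto (fun y : ℝ => T (0, y)) (𝓝 0) (𝓝 0) := by
    have := hTcont.tendsto
    rwa [hT0] at this
  have hev1 : ∀ᶠ y in 𝓝 (0 : ℝ), |T (0, y)| ≤ τ := by
    have hball' : Metric.ball (0 : ℝ) τ ∈ 𝓝 (0 : ℝ) := Metric.ball_mem_nhds 0 hτpos
    filter_upwards [hTtend hball'] with y hy
    rw [Set.mem_preimage, Metric.mem_ball, Real.dist_eq, sub_zero] at hy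
    exact hy.le
  have hev2 : ∀ᶠ y in 𝓝 (0 : ℝ), ((0 : ℝ), y) ∈ U := by
    have h2 : Continuous (fun y : ℝ => ((0 : ℝ), y)) := continuous_const.prodMk continuous_id
    have := h2.continuousAt (x := (0 : ℝ)).preimage_mem_nhds (by simpa using hU)
    filter_upwards [this] with y hy using hy
  have hev3 : ∀ᶠ y in 𝓝 (0 : ℝ), |y| ≤ r := by
    filter_upwards [Metric.ball_mem_nhds (0 : ℝ) hrpos] with y hy
    rw [Metric.mem_ball, Real.dist_eq, sub_zero] at hy
    exact hy.le
  have hTzero : ∀ᶠ y in 𝓝 (0 : ℝ), T (0, y) = 0 := by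
    filter_upwards [hev1, hev2, hev3] with y h1 h2 h3
    have hX := hXT ((0 : ℝ), y) h2
    simp only [neg_zero] at hX
    exact hinj y h3 (T (0, y)) h1 hX
  have heq : (fun y : ℝ => T (0, y)) =ᶠ[𝓝 (0 : ℝ)] (fun _ => (0 : ℝ)) := hTzero
  rw [heq.deriv_eq, deriv_const]
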